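/- Consider the deterministic Obizhaeva–Wang model with parameters q > 0, ρ > 0, ε ∈ [0,1], T > 0, initial price P₀ ∈ ℝ and initial position x₀ ∈ ℝ, and no external order flow (N ≡ 0, D₀ = 0). The Obizhaeva–Wang strategy holds X_t = x₀·(1 + ρ(T−t))/(2 + ρT) for t ∈ (0,T], obtained from X₀ = x₀ by an initial block trade v₀ = −x₀/(2+ρT) at time 0, continuous trading at rate ẋ = −ρx₀/(2+ρT) on (0,T), and a final block trade v_T = −x₀/(2+ρT) at time T. Along this strategy the price is P_t = S_t + D_t with S_t = P₀ + (ε/q)·(X_t − x₀) and D_t = −(1−ε)·x₀/(q(2+ρT)) constant for all t ∈ (0,T] (D jumps by ((1−ε)/q)·v at each block trade of size v and satisfies D' = −ρD + ((1−ε)/q)·ẋ in between, starting from D₀ = 0). The total execution cost P₀·v₀ + v₀²/(2q) + ∫₀ᵀ P_t·ẋ dt + P_T·v_T + v_T²/(2q) equals −P₀·x₀ + [(1−ε)/(2+ρT) + ε/2]·x₀²/q. -/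

import Mathlib

/-- The Obizhaeva–Wang position: X_t = x₀·(1 + ρ(T−t))/(2 + ρT). -/
noncomputable def owX (ρ T x₀ : ℝ) (t : ℝ) : ℝ := x₀ * (1 + ρ * (T - t)) / (2 + ρ * T)

/-- The initial and final block trades: v₀ = v_T = −x₀/(2+ρT). -/
noncomputable def owBlock (ρ T x₀ : ℝ) : ℝ := -x₀ / (2 + ρ * T)

/-- The continuous trading rate ẋ = −ρx₀/(2+ρT). -/
noncomputable def owRate (ρ T x₀ : ℝ) : ℝ := -(ρ * x₀) / (2 + ρ * T)

/-- The constant transient price deviation D_t = −(1−ε)·x₀/(q(2+ρT)) on (0,T]. -/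
noncomputable def owD (q ρ ε T x₀ : ℝ) : ℝ := -((1 - ε) * x₀) / (q * (2 + ρ * T))

/-- The fundamental price S_t = P₀ + (ε/q)·(X_t − x₀) along the OW strategy. -/
noncomputable def owS (q ρ ε T P₀ x₀ : ℝ) (t : ℝ) : ℝ := P₀ + (ε / q) * (owX ρ T x₀ t - x₀)

/-- The price P_t = S_t + D_t along the OW strategy, for t ∈ (0,T]. -/
noncomputable def owP (q ρ ε T P₀ x₀ : ℝ) (t : ℝ) : ℝ := owS q ρ ε T P₀ x₀ t + owD q ρ ε T x₀

theorem obizhaeva_wang_strategy_and_cost (q ρ ε T P₀ x₀ : ℝ)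
    (hq : 0 < q) (hρ : 0 < ρ) (hε : ε ∈ Set.Icc (0:ℝ) 1) (hT : 0 < T) :
    -- the position after the initial block trade v₀ at time 0
    owX ρ T x₀ 0 = x₀ + owBlock ρ T x₀ ∧
    -- on (0,T) the position evolves at the continuous rate ẋ = −ρx₀/(2+ρT)
    (∀ t : ℝ, HasDerivAt (owX ρ T x₀) (owRate ρ T x₀) t) ∧
    -- the final block trade v_T closes the position
    owX ρ T x₀ T + owBlock ρ T x₀ = 0 ∧
    -- D jumps from D₀ = 0 by ((1−ε)/q)·v₀ at the initial block trade
    ((1 - ε) / q) * owBlock ρ T x₀ = owD q ρ ε T x₀ ∧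
    -- the constant D solves D' = −ρD + ((1−ε)/q)·ẋ on (0,T)
    -ρ * owD q ρ ε T x₀ + ((1 - ε) / q) * owRate ρ T x₀ = 0 ∧
    -- total execution cost
    P₀ * owBlock ρ T x₀ + (owBlock ρ T x₀) ^ 2 / (2 * q)
        + (∫ t in (0:ℝ)..T, owP q ρ ε T P₀ x₀ t * owRate ρ T x₀)
        + owP q ρ ε T P₀ x₀ T * owBlock ρ T x₀ + (owBlock ρ T x₀) ^ 2 / (2 * q)
      = -(P₀ * x₀) + ((1 - ε) / (2 + ρ * T) + ε / 2) * x₀ ^ 2 / q := by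
  have hd : (2 + ρ * T) ≠ 0 := by positivity
  have hq' : q ≠ 0 := ne_of_gt hq
  refine ⟨?_, ?_, ?_, ?_, ?_, ?_⟩
  · simp only [owX, owBlock]; field_simp; ring
  · intro t
    have h : HasDerivAt (fun t : ℝ => x₀ * (1 + ρ * (T - id t)) / (2 + ρ * T))
        (x₀ * (ρ * -1) / (2 + ρ * T)) t :=
      (((hasDerivAt_id t).const_sub T).const_mul ρ |>.const_add 1 |>.const_mul x₀).div_const _
    have h2 : HasDerivAt (owX ρ T x₀) (x₀ * (ρ * -1) / (2 + ρ * T)) t := h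
    convert h2 using 1
    simp only [owRate]; ring
  · simp only [owX, owBlock]; field_simp; ring
  · simp only [owBlock, owD]; field_simp
  · simp only [owD, owRate]; field_simp; ring
  · have hint : (∫ t in (0:ℝ)..T, owP q ρ ε T P₀ x₀ t * owRate ρ T x₀)
        = ∫ t in (0:ℝ)..T, ((owP q ρ ε T P₀ x₀ 0 * owRate ρ T x₀)
            + (ε / q * owRate ρ T x₀ * owRate ρ T x₀) * t) := by
      congr 1
      funext t
      simp only [owP, owS, owX, owD, owRate]
      field_simp
      ring
    rw [hint, intervalIntegral.integral_add (intervalIntegrable_const)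
        ((intervalIntegral.intervalIntegrable_id).const_mul _),
      intervalIntegral.integral_const,
      intervalIntegral.integral_const_mul, integral_id]
    simp only [owP, owS, owX, owD, owRate, owBlock, smul_eq_mul]
    field_simp
    ring
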